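/- (Gap analysis, Case 7: R12 ≤ R21, R13 ≤ R31, R23 ≥ R32.) Suppose the nonnegative rate tuple lies in C̲'_g and additionally R12 ≤ R21, R13 ≤ R31, R23 ≥ R32. Define α32^b = (2^{2R32+1}−1)/(2h3²P), α31^b = 2^{2R32+1}(2^{2R13+1}−1)/(2h3²P), α31^u = 2^{2R13+2R32+2}(2^{2(R31−R13)}−1)/(h3²P), α21^b = 2^{2R32+2R31+2}(2^{2R12+1}−1)/(2h2²P), α23^u = 2^{2R12+2R31+2R32+3}(2^{2(R23−R32)}−1)/(h2²P), α21^u = 2^{2R12+2R31+2R23+3}(2^{2(R21−R12)}−1)/(h2²P), and α23^b = (h3²/h2²)α32^b, α13^b = (h3²/h1²)α31^b, α12^b = (h2²/h1²)α21^b. Then α31^b+α32^b+α31^u ≤ 1, α21^b+α23^b+α21^u+α23^u ≤ 1, α12^b+α13^b ≤ 1, and (2^{2(R13+R23)}−1)/(h3²P) + 2^{2(R13+R23)}(2^{2R12}−1)/(h2²P) + 2^{2(R13+R23+R12)}(2^{2(R21−R12+R31−R13)}−1)/(h1²P) ≤ 1. -/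

import Mathlib

noncomputable def Cg (x : ℝ) : ℝ := (1 / 2) * Real.logb 2 (1 + x)

private lemma rpow_add2 (x y : ℝ) : (2:ℝ) ^ (x + y) = (2:ℝ) ^ x * (2:ℝ) ^ y :=
  Real.rpow_add two_pos x y

private lemma expF {x y : ℝ} (hx : 0 < 1 + x) (h : y ≤ Real.logb 2 (1 + x)) :
    (2:ℝ) ^ y ≤ 1 + x := by
  calc (2:ℝ) ^ y ≤ (2:ℝ) ^ Real.logb 2 (1 + x) :=
        Real.rpow_le_rpow_of_exponent_le one_le_two h
    _ = 1 + x := Real.rpow_logb two_pos (by norm_num) hx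

private lemma one_le_pw {t : ℝ} (ht : 0 ≤ t) : (1:ℝ) ≤ (2:ℝ) ^ t := by
  calc (1:ℝ) = (2:ℝ) ^ (0:ℝ) := (Real.rpow_zero 2).symm
    _ ≤ (2:ℝ) ^ t := Real.rpow_le_rpow_of_exponent_le one_le_two ht

private lemma pw_mono {s t : ℝ} (h : s ≤ t) : (2:ℝ) ^ s ≤ (2:ℝ) ^ t :=
  Real.rpow_le_rpow_of_exponent_le one_le_two h

private lemma sq_abs_sum_le {x y : ℝ} (h : y ^ 2 ≤ x ^ 2) : (|x| + |y|) ^ 2 ≤ 4 * x ^ 2 := by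
  have hxy : |y| ≤ |x| := by
    rw [← Real.sqrt_sq_eq_abs, ← Real.sqrt_sq_eq_abs]
    exact Real.sqrt_le_sqrt h
  nlinarith [abs_nonneg x, abs_nonneg y, sq_abs x, sq_abs y]

private lemma one_le_mul2 {x y : ℝ} (hx : 1 ≤ x) (hy : 1 ≤ y) : 1 ≤ x * y := by nlinarith

private lemma one_le_mul3 {x y z : ℝ} (hx : 1 ≤ x) (hy : 1 ≤ y) (hz : 1 ≤ z) :
    1 ≤ x * y * z := one_le_mul2 (one_le_mul2 hx hy) hz

private lemma le_mul_left2 {x y f : ℝ} (hx : 1 ≤ x) (hy : 1 ≤ y) (hf : 0 ≤ f) :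
    f ≤ x * y * f := by nlinarith [one_le_mul2 hx hy]

private lemma c1v : (2:ℝ)^(1:ℝ) = 2 := Real.rpow_one 2
private lemma c2v : (2:ℝ)^(2:ℝ) = 4 := by
  rw [show (2:ℝ)^(2:ℝ) = 2^((2:ℕ):ℝ) by norm_num, Real.rpow_natCast]; norm_num
private lemma c3v : (2:ℝ)^(3:ℝ) = 8 := by
  rw [show (2:ℝ)^(3:ℝ) = 2^((3:ℕ):ℝ) by norm_num, Real.rpow_natCast]; norm_num
private lemma c4v : (2:ℝ)^(4:ℝ) = 16 := by
  rw [show (2:ℝ)^(4:ℝ) = 2^((4:ℕ):ℝ) by norm_num, Real.rpow_natCast]; norm_num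
private lemma c6v : (2:ℝ)^(6:ℝ) = 64 := by
  rw [show (2:ℝ)^(6:ℝ) = 2^((6:ℕ):ℝ) by norm_num, Real.rpow_natCast]; norm_num
private lemma c7v : (2:ℝ)^(7:ℝ) = 128 := by
  rw [show (2:ℝ)^(7:ℝ) = 2^((7:ℕ):ℝ) by norm_num, Real.rpow_natCast]; norm_num

set_option maxHeartbeats 2000000 in
theorem stmt_17
    (P h1 h2 h3 : ℝ) (hP : 0 < P)
    (hh12 : h2 ^ 2 ≤ h1 ^ 2) (hh23 : h3 ^ 2 ≤ h2 ^ 2) (hh3 : 0 < h3 ^ 2)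
    (R12 R13 R21 R23 R31 R32 : ℝ)
    (hr12 : 0 ≤ R12) (hr13 : 0 ≤ R13) (hr21 : 0 ≤ R21)
    (hr23 : 0 ≤ R23) (hr31 : 0 ≤ R31) (hr32 : 0 ≤ R32)
    (hG1 : R31 + R32 ≤ Cg (h3 ^ 2 * P) - 2)
    (hG2 : R13 + R23 ≤ Cg (h3 ^ 2 * P) - 2)
    (hG3 : R12 + R13 + R32 ≤ Cg (h2 ^ 2 * P + h3 ^ 2 * P) - 3)
    (hG4 : R13 + R23 + R12 ≤ Cg (h2 ^ 2 * P + h3 ^ 2 * P) - 3)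
    (hG5 : R12 + R31 + R32 ≤ Cg (h1 ^ 2 * P + h2 ^ 2 * P) - 3)
    (hG6 : R13 + R23 + R21 ≤ Cg (h1 ^ 2 * P + h3 ^ 2 * P) - 3)
    (hG7 : R21 + R31 + R23 ≤ Cg ((|h2| + |h3|) ^ 2 * P) - 7 / 2)
    (hG8 : R21 + R31 + R32 ≤ Cg ((|h2| + |h3|) ^ 2 * P) - 7 / 2)
    (hc1 : R12 ≤ R21) (hc2 : R13 ≤ R31) (hc3 : R32 ≤ R23)
    (a32b a31b a31u a21b a23u a21u a23b a13b a12b : ℝ)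
    (ha32b : a32b = ((2:ℝ) ^ (2 * R32 + 1) - 1) / (2 * h3 ^ 2 * P))
    (ha31b : a31b = (2:ℝ) ^ (2 * R32 + 1) * ((2:ℝ) ^ (2 * R13 + 1) - 1) / (2 * h3 ^ 2 * P))
    (ha31u : a31u = (2:ℝ) ^ (2 * R13 + 2 * R32 + 2) * ((2:ℝ) ^ (2 * (R31 - R13)) - 1) / (h3 ^ 2 * P))
    (ha21b : a21b = (2:ℝ) ^ (2 * R32 + 2 * R31 + 2) * ((2:ℝ) ^ (2 * R12 + 1) - 1) / (2 * h2 ^ 2 * P))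
    (ha23u : a23u = (2:ℝ) ^ (2 * R12 + 2 * R31 + 2 * R32 + 3) * ((2:ℝ) ^ (2 * (R23 - R32)) - 1) / (h2 ^ 2 * P))
    (ha21u : a21u = (2:ℝ) ^ (2 * R12 + 2 * R31 + 2 * R23 + 3) * ((2:ℝ) ^ (2 * (R21 - R12)) - 1) / (h2 ^ 2 * P))
    (ha23b : a23b = h3 ^ 2 / h2 ^ 2 * a32b)
    (ha13b : a13b = h3 ^ 2 / h1 ^ 2 * a31b)
    (ha12b : a12b = h2 ^ 2 / h1 ^ 2 * a21b) :
    a31b + a32b + a31u ≤ 1 ∧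
    a21b + a23b + a21u + a23u ≤ 1 ∧
    a12b + a13b ≤ 1 ∧
    ((2:ℝ) ^ (2 * (R13 + R23)) - 1) / (h3 ^ 2 * P)
      + (2:ℝ) ^ (2 * (R13 + R23)) * ((2:ℝ) ^ (2 * R12) - 1) / (h2 ^ 2 * P)
      + (2:ℝ) ^ (2 * (R13 + R23 + R12)) * ((2:ℝ) ^ (2 * (R21 - R12 + R31 - R13)) - 1) / (h1 ^ 2 * P) ≤ 1 := by
  have hh2 : 0 < h2 ^ 2 := lt_of_lt_of_le hh3 hh23
  have hh1 : 0 < h1 ^ 2 := lt_of_lt_of_le hh2 hh12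
  have hh2ne : h2 ^ 2 ≠ 0 := ne_of_gt hh2
  have hh1ne : h1 ^ 2 ≠ 0 := ne_of_gt hh1
  have hh3ne : h3 ^ 2 ≠ 0 := ne_of_gt hh3
  set N1 := h1 ^ 2 * P with hN1def
  set N2 := h2 ^ 2 * P with hN2def
  set N3 := h3 ^ 2 * P with hN3def
  set M := (|h2| + |h3|) ^ 2 * P with hMdef
  have hN1pos : 0 < N1 := by rw [hN1def]; exact mul_pos hh1 hP
  have hN2pos : 0 < N2 := by rw [hN2def]; exact mul_pos hh2 hP
  have hN3pos : 0 < N3 := by rw [hN3def]; exact mul_pos hh3 hP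
  have hN23 : N3 ≤ N2 := by rw [hN2def, hN3def]; exact mul_le_mul_of_nonneg_right hh23 hP.le
  have hN21 : N2 ≤ N1 := by rw [hN2def, hN1def]; exact mul_le_mul_of_nonneg_right hh12 hP.le
  have hM4 : M ≤ 4 * N2 := by
    have := mul_le_mul_of_nonneg_right (sq_abs_sum_le hh23) hP.le
    rw [hMdef, hN2def]; linarith
  have hMnn : 0 ≤ M := by rw [hMdef]; positivity
  have hpos3 : (0:ℝ) < 1 + N3 := by linarith
  have hpos23 : (0:ℝ) < 1 + (N2 + N3) := by linarith
  have hpos12 : (0:ℝ) < 1 + (N1 + N2) := by linarith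
  have hposM : (0:ℝ) < 1 + M := by linarith
  set a := (2:ℝ) ^ (2 * R12) with hadef
  set b := (2:ℝ) ^ (2 * R13) with hbdef
  set c := (2:ℝ) ^ (2 * R21) with hcdef
  set d := (2:ℝ) ^ (2 * R23) with hddef
  set e := (2:ℝ) ^ (2 * R31) with hedef
  set f := (2:ℝ) ^ (2 * R32) with hfdef
  have ha1 : 1 ≤ a := by rw [hadef]; exact one_le_pw (by linarith)
  have hb1 : 1 ≤ b := by rw [hbdef]; exact one_le_pw (by linarith)
  have hc1' : 1 ≤ c := by rw [hcdef]; exact one_le_pw (by linarith)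
  have hd1 : 1 ≤ d := by rw [hddef]; exact one_le_pw (by linarith)
  have he1 : 1 ≤ e := by rw [hedef]; exact one_le_pw (by linarith)
  have hf1 : 1 ≤ f := by rw [hfdef]; exact one_le_pw (by linarith)
  have hbe : b ≤ e := by rw [hbdef, hedef]; exact pw_mono (by linarith)
  -- numerator identities
  have k32b : (2:ℝ) ^ (2 * R32 + 1) = f * 2 := by
    rw [rpow_add2, c1v, ← hfdef]
  have k31b : (2:ℝ) ^ (2 * R32 + 1) * ((2:ℝ) ^ (2 * R13 + 1) - 1) = b * f * 4 - f * 2 := by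
    rw [mul_sub, mul_one, ← Real.rpow_add two_pos,
      show 2 * R32 + 1 + (2 * R13 + 1) = 2 * R13 + (2 * R32 + 2) by ring]
    simp only [rpow_add2, c1v, c2v, ← hbdef, ← hfdef]; ring
  have k31u : (2:ℝ) ^ (2 * R13 + 2 * R32 + 2) * ((2:ℝ) ^ (2 * (R31 - R13)) - 1)
      = e * f * 4 - b * f * 4 := by
    rw [mul_sub, mul_one, ← Real.rpow_add two_pos,
      show 2 * R13 + 2 * R32 + 2 + 2 * (R31 - R13) = 2 * R31 + (2 * R32 + 2) by ring,
      show (2 * R13 + 2 * R32 + 2 : ℝ) = 2 * R13 + (2 * R32 + 2) by ring]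
    simp only [rpow_add2, c2v, ← hbdef, ← hedef, ← hfdef]; ring
  have k21b : (2:ℝ) ^ (2 * R32 + 2 * R31 + 2) * ((2:ℝ) ^ (2 * R12 + 1) - 1)
      = a * e * f * 8 - e * f * 4 := by
    rw [mul_sub, mul_one, ← Real.rpow_add two_pos,
      show 2 * R32 + 2 * R31 + 2 + (2 * R12 + 1) = 2 * R12 + (2 * R31 + (2 * R32 + 3)) by ring,
      show (2 * R32 + 2 * R31 + 2 : ℝ) = 2 * R31 + (2 * R32 + 2) by ring]
    simp only [rpow_add2, c2v, c3v, ← hadef, ← hedef, ← hfdef]; ring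
  have k23u : (2:ℝ) ^ (2 * R12 + 2 * R31 + 2 * R32 + 3) * ((2:ℝ) ^ (2 * (R23 - R32)) - 1)
      = a * d * e * 8 - a * e * f * 8 := by
    rw [mul_sub, mul_one, ← Real.rpow_add two_pos,
      show 2 * R12 + 2 * R31 + 2 * R32 + 3 + 2 * (R23 - R32)
        = 2 * R12 + (2 * R23 + (2 * R31 + 3)) by ring,
      show (2 * R12 + 2 * R31 + 2 * R32 + 3 : ℝ) = 2 * R12 + (2 * R31 + (2 * R32 + 3)) by ring]
    simp only [rpow_add2, c3v, ← hadef, ← hddef, ← hedef, ← hfdef]; ring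
  have k21u : (2:ℝ) ^ (2 * R12 + 2 * R31 + 2 * R23 + 3) * ((2:ℝ) ^ (2 * (R21 - R12)) - 1)
      = c * d * e * 8 - a * d * e * 8 := by
    rw [mul_sub, mul_one, ← Real.rpow_add two_pos,
      show 2 * R12 + 2 * R31 + 2 * R23 + 3 + 2 * (R21 - R12)
        = 2 * R21 + (2 * R23 + (2 * R31 + 3)) by ring,
      show (2 * R12 + 2 * R31 + 2 * R23 + 3 : ℝ) = 2 * R12 + (2 * R23 + (2 * R31 + 3)) by ring]
    simp only [rpow_add2, c3v, ← hadef, ← hcdef, ← hddef, ← hedef]; ring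
  have g1 : (2:ℝ) ^ (2 * (R13 + R23)) = b * d := by
    rw [show 2 * (R13 + R23) = 2 * R13 + 2 * R23 by ring, rpow_add2, ← hbdef, ← hddef]
  have g2 : (2:ℝ) ^ (2 * (R13 + R23 + R12)) * ((2:ℝ) ^ (2 * (R21 - R12 + R31 - R13)) - 1)
      = c * d * e - a * b * d := by
    rw [mul_sub, mul_one, ← Real.rpow_add two_pos,
      show 2 * (R13 + R23 + R12) + 2 * (R21 - R12 + R31 - R13)
        = 2 * R21 + (2 * R23 + 2 * R31) by ring,
      show (2 * (R13 + R23 + R12) : ℝ) = 2 * R12 + (2 * R13 + 2 * R23) by ring]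
    simp only [rpow_add2, ← hadef, ← hbdef, ← hcdef, ← hddef, ← hedef]; ring
  -- exponential bounds from the rate constraints
  have F1 : e * f * 16 ≤ 1 + N3 := by
    have h : (2:ℝ) ^ (2 * R31 + (2 * R32 + 4)) ≤ 1 + N3 :=
      expF hpos3 (by simp only [Cg] at hG1; linarith)
    simp only [rpow_add2, c4v, ← hedef, ← hfdef] at h
    linarith
  have F2 : b * d * 16 ≤ 1 + N3 := by
    have h : (2:ℝ) ^ (2 * R13 + (2 * R23 + 4)) ≤ 1 + N3 :=
      expF hpos3 (by simp only [Cg] at hG2; linarith)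
    simp only [rpow_add2, c4v, ← hbdef, ← hddef] at h
    linarith
  have F4 : a * b * d * 64 ≤ 1 + (N2 + N3) := by
    have h : (2:ℝ) ^ (2 * R12 + (2 * R13 + (2 * R23 + 6))) ≤ 1 + (N2 + N3) :=
      expF hpos23 (by simp only [Cg] at hG4; linarith)
    simp only [rpow_add2, c6v, ← hadef, ← hbdef, ← hddef] at h
    linarith
  have F5 : a * e * f * 64 ≤ 1 + (N1 + N2) := by
    have h : (2:ℝ) ^ (2 * R12 + (2 * R31 + (2 * R32 + 6))) ≤ 1 + (N1 + N2) :=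
      expF hpos12 (by simp only [Cg] at hG5; linarith)
    simp only [rpow_add2, c6v, ← hadef, ← hedef, ← hfdef] at h
    linarith
  have F7 : c * d * e * 128 ≤ 1 + M := by
    have h : (2:ℝ) ^ (2 * R21 + (2 * R23 + (2 * R31 + 7))) ≤ 1 + M :=
      expF hposM (by simp only [Cg] at hG7; linarith)
    simp only [rpow_add2, c7v, ← hcdef, ← hddef, ← hedef] at h
    linarith
  have hef1 : 1 ≤ e * f := one_le_mul2 he1 hf1
  have hbf1 : 1 ≤ b * f := one_le_mul2 hb1 hf1
  have hbd1 : 1 ≤ b * d := one_le_mul2 hb1 hd1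
  have habd1 : 1 ≤ a * b * d := one_le_mul3 ha1 hb1 hd1
  have haef : f ≤ a * e * f := le_mul_left2 ha1 he1 (by linarith)
  have hbfef : b * f ≤ e * f := mul_le_mul_of_nonneg_right hbe (by linarith)
  have hN3_15 : 15 ≤ N3 := by linarith
  -- rewritten forms of the alphas
  have e32b : a32b = (f * 2 - 1) / (2 * N3) := by
    rw [ha32b, k32b]; simp only [hN3def]; ring
  have e31b : a31b = (b * f * 4 - f * 2) / (2 * N3) := by
    rw [ha31b, k31b]; simp only [hN3def]; ring
  have e31u : a31u = (e * f * 4 - b * f * 4) / N3 := by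
    rw [ha31u, k31u]
  have e21b : a21b = (a * e * f * 8 - e * f * 4) / (2 * N2) := by
    rw [ha21b, k21b]; simp only [hN2def]; ring
  have e23u : a23u = (a * d * e * 8 - a * e * f * 8) / N2 := by
    rw [ha23u, k23u]
  have e21u : a21u = (c * d * e * 8 - a * d * e * 8) / N2 := by
    rw [ha21u, k21u]
  have e23b : a23b = (f * 2 - 1) / (2 * N2) := by
    rw [ha23b, e32b]; simp only [hN2def, hN3def]
    have h3ne : h3 ≠ 0 := by rintro rfl; simp at hh3
    field_simp
  have e13b : a13b = (b * f * 4 - f * 2) / (2 * N1) := by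
    rw [ha13b, e31b]; simp only [hN1def, hN3def]
    have h3ne : h3 ≠ 0 := by rintro rfl; simp at hh3
    field_simp
  have e12b : a12b = (a * e * f * 8 - e * f * 4) / (2 * N1) := by
    rw [ha12b, e21b]; simp only [hN1def, hN2def]
    have h2ne : h2 ≠ 0 := by rintro rfl; simp at hh2
    field_simp
  refine ⟨?_, ?_, ?_, ?_⟩
  · -- claim 1
    have hsum : a31b + a32b + a31u = (e * f * 8 - b * f * 4 - 1) / (2 * N3) := by
      rw [e31b, e32b, e31u]; field_simp; ring
    rw [hsum, div_le_one (by positivity)]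
    linarith
  · -- claim 2
    have hsum : a21b + a23b + a21u + a23u
        = (c * d * e * 16 - a * e * f * 8 - e * f * 4 + f * 2 - 1) / (2 * N2) := by
      rw [e21b, e23b, e21u, e23u]; field_simp; ring
    rw [hsum, div_le_one (by positivity)]
    linarith
  · -- claim 3
    have hsum : a12b + a13b = (a * e * f * 8 - e * f * 4 + b * f * 4 - f * 2) / (2 * N1) := by
      rw [e12b, e13b]; field_simp; ring
    rw [hsum, div_le_one (by positivity)]
    linarith
  · -- claim 4
    rw [g1, g2]
    have t1 : (b * d - 1) / N3 ≤ 1 / 16 := by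
      rw [div_le_iff₀ hN3pos]; linarith
    have t2 : b * d * (a - 1) / N2 ≤ 1 / 16 := by
      rw [div_le_iff₀ hN2pos]
      have hexp : b * d * (a - 1) = a * b * d - b * d := by ring
      rw [hexp]; linarith
    have t3 : (c * d * e - a * b * d) / N1 ≤ 1 / 16 := by
      rw [div_le_iff₀ hN1pos]; linarith
    linarith
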